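/- Let B be a graded commutative ℚ-algebra all of whose degree-lowering ℚ-linear derivations vanish, and let A = B[u]/(u²) where u has positive degree m. Let φ : A → A be a graded algebra endomorphism whose restriction-projection φ₁ := p₁ ∘ φ ∘ i₁ : B → B (where A = B ⊕ uB) is a graded automorphism. Then φ(x) = φ₁(x) for all x ∈ B; that is, φ maps B into B. -/
import Mathlib


/-- if every degree-lowering ℚ-linear derivation of the graded algebra B
vanishes, then a graded endomorphism φ of A = B[u]/(u²) whose B-component φ₁ is an
automorphism maps B into B, i.e. φ(x) = φ₁(x) on B. -/
theorem stmt5 (B A : Type*) [CommRing B] [CommRing A] [Algebra ℚ B] [Algebra ℚ A]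
    (ℬ : ℤ → Submodule ℚ B) (m : ℤ) (hm : 0 < m)
    (hder : ∀ D : B → B,
      (∀ x y, D (x + y) = D x + D y) →
      (∀ (q : ℚ) (x : B), D (q • x) = q • D x) →
      (∀ x y, D (x * y) = D x * y + x * D y) →
      (∀ i x, x ∈ ℬ i → D x ∈ ℬ (i - m)) →
      ∀ x, D x = 0)
    (ι : B →ₐ[ℚ] A) (u : A) (hu : u ^ 2 = 0)
    (hfree : ∀ b c : B, ι b + u * ι c = 0 → b = 0 ∧ c = 0)
    (φ : A →ₐ[ℚ] A) (φ₁ : B ≃ₐ[ℚ] B) (P : B → B)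
    (hφ : ∀ b : B, φ (ι b) = ι (φ₁ b) + u * ι (P b))
    (hP : ∀ i x, x ∈ ℬ i → P x ∈ ℬ (i - m))
    (hφ₁ : ∀ i x, x ∈ ℬ i → φ₁.symm x ∈ ℬ i) :
    ∀ b : B, φ (ι b) = ι (φ₁ b) := by
  have key : ∀ b c b' c' : B, ι b + u * ι c = ι b' + u * ι c' → b = b' ∧ c = c' := by
    intro b c b' c' h
    have h2 : ι (b - b') + u * ι (c - c') = 0 := by
      rw [map_sub, map_sub]; linear_combination h
    obtain ⟨h1, h2⟩ := hfree _ _ h2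
    exact ⟨sub_eq_zero.mp h1, sub_eq_zero.mp h2⟩
  have Padd : ∀ b c, P (b + c) = P b + P c := by
    intro b c
    have h : φ (ι (b + c)) = φ (ι b) + φ (ι c) := by rw [map_add, map_add]
    rw [hφ, hφ, hφ] at h
    have h' : ι (φ₁ (b + c)) + u * ι (P (b + c))
        = ι (φ₁ b + φ₁ c) + u * ι (P b + P c) := by
      simp only [map_add] at h ⊢; linear_combination h
    exact (key _ _ _ _ h').2
  have Psmul : ∀ (q : ℚ) (b : B), P (q • b) = q • P b := by
    intro q b
    have h : φ (ι (q • b)) = q • φ (ι b) := by rw [map_smul, map_smul]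
    rw [hφ, hφ] at h
    have h' : ι (φ₁ (q • b)) + u * ι (P (q • b))
        = ι (q • φ₁ b) + u * ι (q • P b) := by
      simp only [map_smul, smul_add, mul_smul_comm] at h ⊢; exact h
    exact (key _ _ _ _ h').2
  have Pmul : ∀ b c, P (b * c) = P b * φ₁ c + φ₁ b * P c := by
    intro b c
    have h : φ (ι (b * c)) = φ (ι b) * φ (ι c) := by rw [map_mul, map_mul]
    rw [hφ, hφ, hφ] at h
    have h' : ι (φ₁ (b * c)) + u * ι (P (b * c))
        = ι (φ₁ b * φ₁ c) + u * ι (P b * φ₁ c + φ₁ b * P c) := by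
      have huu : u * u = 0 := by rw [← sq]; exact hu
      simp only [map_mul, map_add] at h ⊢
      linear_combination h + ι (P b) * ι (P c) * huu
    exact (key _ _ _ _ h').2
  set D : B → B := fun x => P (φ₁.symm x) with hD
  have hDzero : ∀ x, D x = 0 := by
    apply hder
    · intro x y; simp only [hD, map_add, Padd]
    · intro q x; simp only [hD, map_smul, Psmul]
    · intro x y
      simp only [hD, map_mul, Pmul, AlgEquiv.apply_symm_apply]
    · intro i x hx; exact hP i _ (hφ₁ i x hx)
  intro b
  have hPb : P b = 0 := by
    have := hDzero (φ₁ b)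
    simpa [hD] using this
  rw [hφ, hPb, map_zero, mul_zero, add_zero]
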